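/- Let b,c be positive integers with bc≥4 and u=bc−2. The 2×2 matrices D_n defined via Chebyshev polynomials (for n≥2 as in the rank-2 cluster algebra) are pairwise distinct: if 2≤m<n then D_m ≠ D_n. In particular, the map n ↦ D_n is injective on integers n≥2. -/

import Mathlib

open Matrix

/-- The rank-2 `D`-matrix given by the Chebyshev formulas (even/odd cases). -/
def chebDMatrix (S : ℤ → ℝ) (b c : ℤ) (n : ℤ) : Matrix (Fin 2) (Fin 2) ℝ :=
  if n % 2 = 0 then
    !![S ((n - 2) / 2) + S ((n - 4) / 2), (b : ℝ) * S ((n - 2) / 2);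
       (c : ℝ) * S ((n - 4) / 2), S ((n - 2) / 2) + S ((n - 4) / 2)]
  else
    !![S ((n - 1) / 2) + S ((n - 3) / 2), (b : ℝ) * S ((n - 3) / 2);
       (c : ℝ) * S ((n - 3) / 2), S ((n - 3) / 2) + S ((n - 5) / 2)]

/-- For positive integers `b, c` with `bc ≥ 4` and `u = bc - 2`, the rank-2 `D`-matrices
`D_n` (`n ≥ 2`) are pairwise distinct; in particular `n ↦ D_n` is injective on `n ≥ 2`. -/
theorem rank2_Dmatrix_pairwise_distinct
    (S : ℝ → ℤ → ℝ)
    (hSm1 : ∀ u : ℝ, S u (-1) = 0)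
    (hS0 : ∀ u : ℝ, S u 0 = 1)
    (hSrec : ∀ (u : ℝ) (p : ℤ), 1 ≤ p → S u p = u * S u (p - 1) - S u (p - 2))
    (b c : ℤ) (hb : 1 ≤ b) (hc : 1 ≤ c) (hbc : 4 ≤ b * c) :
    (∀ m n : ℤ, 2 ≤ m → m < n →
        chebDMatrix (S ((b * c - 2 : ℤ) : ℝ)) b c m ≠ chebDMatrix (S ((b * c - 2 : ℤ) : ℝ)) b c n) ∧
    Set.InjOn (chebDMatrix (S ((b * c - 2 : ℤ) : ℝ)) b c) {n : ℤ | 2 ≤ n} := by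
  set u : ℝ := ((b * c - 2 : ℤ) : ℝ) with hu_def
  have hu : (2 : ℝ) ≤ u := by
    have : (4 : ℤ) ≤ b * c := hbc
    have h4 : (4 : ℝ) ≤ (b : ℝ) * c := by exact_mod_cast this
    rw [hu_def]; push_cast; linarith
  have hP : ∀ p : ℤ, -1 ≤ p → 0 ≤ S u p ∧ S u p + 1 ≤ S u (p + 1) := by
    refine Int.le_induction ?_ ?_
    · constructor
      · rw [hSm1]
      · rw [hSm1, show (-1 : ℤ) + 1 = 0 by ring, hS0]; norm_num
    · intro p hp ih
      have h1 : S u (p + 1 + 1) = u * S u (p + 1) - S u p := by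
        have h := hSrec u (p + 2) (by omega)
        rw [show p + 2 - 1 = p + 1 by ring, show p + 2 - 2 = p by ring] at h
        rw [show p + 1 + 1 = p + 2 by ring, h]
      have hS1 : (1 : ℝ) ≤ S u (p + 1) := by linarith [ih.1, ih.2]
      constructor
      · linarith
      · rw [h1]; nlinarith [ih.1, ih.2]
  have hlt : ∀ p q : ℤ, -1 ≤ p → p < q → S u p < S u q := by
    intro p q hp hpq
    refine Int.le_induction (motive := fun r _ => S u p < S u r) ?_ ?_ q (by omega : p + 1 ≤ q)
    · linarith [(hP p hp).2]
    · intro r hr ih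
      linarith [(hP r (by omega)).2]
  have hbR : (0 : ℝ) < (b : ℝ) := by exact_mod_cast (by omega : (0:ℤ) < b)
  have main : ∀ m n : ℤ, 2 ≤ m → m < n →
      chebDMatrix (S u) b c m ≠ chebDMatrix (S u) b c n := by
    intro m n hm hmn heq
    rcases Int.emod_two_eq m with hme | hmo <;> rcases Int.emod_two_eq n with hne | hno
    · -- both even
      obtain ⟨k, rfl⟩ : ∃ k, m = 2 * k + 2 := ⟨(m - 2) / 2, by omega⟩
      obtain ⟨l, rfl⟩ : ∃ l, n = 2 * l + 2 := ⟨(n - 2) / 2, by omega⟩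
      rw [chebDMatrix, chebDMatrix, if_pos hme, if_pos hne,
        show (2 * k + 2 - 2) / 2 = k by omega, show (2 * k + 2 - 4) / 2 = k - 1 by omega,
        show (2 * l + 2 - 2) / 2 = l by omega, show (2 * l + 2 - 4) / 2 = l - 1 by omega] at heq
      have h00 := congrFun (congrFun heq 0) 0
      simp at h00
      have h1 := hlt k l (by omega) (by omega)
      have h2 := hlt (k - 1) (l - 1) (by omega) (by omega)
      linarith
    · -- m even, n odd
      obtain ⟨k, rfl⟩ : ∃ k, m = 2 * k + 2 := ⟨(m - 2) / 2, by omega⟩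
      obtain ⟨l, rfl⟩ : ∃ l, n = 2 * l + 1 := ⟨(n - 1) / 2, by omega⟩
      rw [chebDMatrix, chebDMatrix, if_pos hme, if_neg (by omega),
        show (2 * k + 2 - 2) / 2 = k by omega, show (2 * k + 2 - 4) / 2 = k - 1 by omega,
        show (2 * l + 1 - 1) / 2 = l by omega, show (2 * l + 1 - 3) / 2 = l - 1 by omega] at heq
      have h00 := congrFun (congrFun heq 0) 0
      simp at h00
      have h1 := hlt k l (by omega) (by omega)
      have h2 := hlt (k - 1) (l - 1) (by omega) (by omega)
      linarith
    · -- m odd, n even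
      obtain ⟨k, rfl⟩ : ∃ k, m = 2 * k + 1 := ⟨(m - 1) / 2, by omega⟩
      obtain ⟨l, rfl⟩ : ∃ l, n = 2 * l + 2 := ⟨(n - 2) / 2, by omega⟩
      rw [chebDMatrix, chebDMatrix, if_neg (by omega), if_pos hne,
        show (2 * k + 1 - 1) / 2 = k by omega, show (2 * k + 1 - 3) / 2 = k - 1 by omega,
        show (2 * l + 2 - 2) / 2 = l by omega, show (2 * l + 2 - 4) / 2 = l - 1 by omega] at heq
      rcases eq_or_lt_of_le (by omega : k ≤ l) with rfl | hkl
      · -- k = l : use (0,1) entry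
        have h01 := congrFun (congrFun heq 0) 1
        simp at h01
        have h1 := hlt (k - 1) k (by omega) (by omega)
        rcases h01 with h | h
        · linarith
        · linarith
      · have h00 := congrFun (congrFun heq 0) 0
        simp at h00
        have h1 := hlt k l (by omega) hkl
        have h2 := hlt (k - 1) (l - 1) (by omega) (by omega)
        linarith
    · -- both odd
      obtain ⟨k, rfl⟩ : ∃ k, m = 2 * k + 1 := ⟨(m - 1) / 2, by omega⟩
      obtain ⟨l, rfl⟩ : ∃ l, n = 2 * l + 1 := ⟨(n - 1) / 2, by omega⟩
      rw [chebDMatrix, chebDMatrix, if_neg (by omega), if_neg (by omega),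
        show (2 * k + 1 - 1) / 2 = k by omega, show (2 * k + 1 - 3) / 2 = k - 1 by omega,
        show (2 * l + 1 - 1) / 2 = l by omega, show (2 * l + 1 - 3) / 2 = l - 1 by omega] at heq
      have h00 := congrFun (congrFun heq 0) 0
      simp at h00
      have h1 := hlt k l (by omega) (by omega)
      have h2 := hlt (k - 1) (l - 1) (by omega) (by omega)
      linarith
  refine ⟨main, ?_⟩
  intro x hx y hy h
  by_contra hne
  rcases lt_or_gt_of_ne hne with hlt' | hlt'
  · exact main x y hx hlt' h
  · exact main y x hy hlt' h.symm
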